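/- Let m ≥ 2. Every (m+2)-angulation Γ of the annulus A(p,q) contains at least two distinct σ-orbits of bridging arcs. -/

import Mathlib

namespace ClusterAnnulus

/-! ## The combinatorial model of the annulus `A(p,q)`

We model the annulus `A(p,q)` by the strip `S = ℝ × [0,1]` together with the shift `σ`
acting by `σ(x,0) = (x + m·p, 0)` on the bottom boundary and `σ(x,1) = (x + m·q, 1)` on
the top boundary.  Marked points are `(i,0)` and `(j,1)` for integers `i, j`. -/

/-- Marked points on the two boundary lines of the strip: `Pt.bot x` is the point
`(x,0)` and `Pt.top x` is the point `(x,1)`. -/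
inductive Pt : Type
  | bot : ℤ → Pt
  | top : ℤ → Pt
  deriving DecidableEq

/-- Combinatorial (isotopy classes of) arcs in the strip:
* `bridging x y` is the straight segment from `(x,0)` to `(y,1)`;
* `botPeriph u v` is an embedded arc in the open strip joining `(u,0)` to `(v,0)`;
* `topPeriph u v` is an embedded arc in the open strip joining `(u,1)` to `(v,1)`. -/
inductive Arc : Type
  | bridging : ℤ → ℤ → Arc
  | botPeriph : ℤ → ℤ → Arc
  | topPeriph : ℤ → ℤ → Arc
  deriving DecidableEq

/-- An arc is bridging if it joins the two boundary components. -/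
def Arc.IsBridging : Arc → Prop
  | .bridging _ _ => True
  | _ => False

/-- `m`-arc conditions: a bridging arc `β(x,y)` requires `x ≡ y (mod m)`; a peripheral
arc `π(u,v)` requires `v = u + k·m + 1` for some `k ≥ 1`. -/
def IsMArc (m : ℕ) : Arc → Prop
  | .bridging x y => x ≡ y [ZMOD (m : ℤ)]
  | .botPeriph u v => ∃ k : ℤ, 1 ≤ k ∧ v = u + k * (m : ℤ) + 1
  | .topPeriph u v => ∃ k : ℤ, 1 ≤ k ∧ v = u + k * (m : ℤ) + 1

/-- The combinatorial crossing relation between arcs. -/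
def Cross : Arc → Arc → Prop
  | .bridging x y, .bridging x' y' => (x - x') * (y - y') < 0
  | .bridging x _, .botPeriph u v => u < x ∧ x < v
  | .botPeriph u v, .bridging x _ => u < x ∧ x < v
  | .bridging _ y, .topPeriph u v => u < y ∧ y < v
  | .topPeriph u v, .bridging _ y => u < y ∧ y < v
  | .botPeriph u v, .botPeriph u' v' => (u < u' ∧ u' < v ∧ v < v') ∨ (u' < u ∧ u < v' ∧ v' < v)
  | .topPeriph u v, .topPeriph u' v' => (u < u' ∧ u' < v ∧ v < v') ∨ (u' < u ∧ u < v' ∧ v' < v)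
  | .botPeriph _ _, .topPeriph _ _ => False
  | .topPeriph _ _, .botPeriph _ _ => False

/-- The `n`-th power of the shift `σ` acting on arcs: it translates bottom endpoints
by `n·m·p` and top endpoints by `n·m·q`. -/
def shiftArc (m p q : ℕ) (n : ℤ) : Arc → Arc
  | .bridging x y => .bridging (x + n * ((m : ℤ) * p)) (y + n * ((m : ℤ) * q))
  | .botPeriph u v => .botPeriph (u + n * ((m : ℤ) * p)) (v + n * ((m : ℤ) * p))
  | .topPeriph u v => .topPeriph (u + n * ((m : ℤ) * q)) (v + n * ((m : ℤ) * q))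

/-- Two arcs lie in the same `σ`-orbit. -/
def SameOrbit (m p q : ℕ) (a b : Arc) : Prop := ∃ n : ℤ, shiftArc m p q n a = b

/-- Possible sides of a face of an `(m+2)`-angulation of the strip: an arc, a bottom
boundary segment `[i,i+1] × {0}`, or a top boundary segment `[j,j+1] × {1}`. -/
inductive Side : Type
  | arc : Arc → Side
  | botSeg : ℤ → Side
  | topSeg : ℤ → Side
  deriving DecidableEq

/-- The endpoints of an arc. -/
def Arc.endpoints : Arc → Finset Pt
  | .bridging x y => {Pt.bot x, Pt.top y}
  | .botPeriph u v => {Pt.bot u, Pt.bot v}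
  | .topPeriph u v => {Pt.top u, Pt.top v}

/-- The endpoints of a side. -/
def Side.endpoints : Side → Finset Pt
  | .arc a => a.endpoints
  | .botSeg i => {Pt.bot i, Pt.bot (i + 1)}
  | .topSeg j => {Pt.top j, Pt.top (j + 1)}

/-- The `n`-th power of the shift `σ` acting on sides. -/
def shiftSide (m p q : ℕ) (n : ℤ) : Side → Side
  | .arc a => .arc (shiftArc m p q n a)
  | .botSeg i => .botSeg (i + n * ((m : ℤ) * p))
  | .topSeg j => .topSeg (j + n * ((m : ℤ) * q))

/-- A rational "angle key" recording the counterclockwise angular position, at a marked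
point, of an arc incident to that marked point (junk value `37` if the point is not an
endpoint of the arc).  Arcs incident to a common marked point are pairwise noncrossing
in an angulation, and their angular order around the point is strictly monotone in this
key. -/
def angKey : Arc → Pt → ℚ
  | .bridging x y, .bot z =>
      if z = x then 1 / 2 - (y : ℚ) / (2 * (1 + |(y : ℚ)|)) else 37
  | .bridging x y, .top z =>
      if z = y then -1 + (x : ℚ) / (2 * (1 + |(x : ℚ)|)) else 37
  | .botPeriph u v, .bot z =>
      if z = u then -1 / ((v : ℚ) - (u : ℚ))
      else if z = v then 2 - 1 / ((v : ℚ) - (u : ℚ)) else 37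
  | .topPeriph u v, .top z =>
      if z = u then 1 / ((v : ℚ) - (u : ℚ))
      else if z = v then -2 - 1 / ((v : ℚ) - (u : ℚ)) else 37
  | _, _ => 37

/-- `CwFollows a b pt` : the arcs `a` and `b` are both incident to the marked point
`pt` and `a` follows `b` in the clockwise direction around `pt` (i.e. the
counterclockwise angle of `a` at `pt` is smaller than that of `b`). -/
def CwFollows (a b : Arc) (pt : Pt) : Prop :=
  pt ∈ a.endpoints ∧ pt ∈ b.endpoints ∧ angKey a pt < angKey b pt

/-- An `(m+2)`-angulation of the annulus `A(p,q)`, presented in the universal cover: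
a `σ`-invariant set of pairwise noncrossing `m`-arcs with exactly `p + q` orbits
under `σ`, together with its set of faces; every face has exactly `m+2` sides, each
side of a face is an arc of the angulation or a boundary segment, each arc bounds
exactly two faces, each boundary segment bounds exactly one face, and around each
marked point a face has either no sides or exactly two sides (polygon condition). -/
structure Angulation (m p q : ℕ) : Type where
  arcs : Set Arc
  faces : Set (Finset Side)
  marc : ∀ a ∈ arcs, IsMArc m a
  shift_mem : ∀ a : Arc, a ∈ arcs ↔ shiftArc m p q 1 a ∈ arcs
  noncross : ∀ a ∈ arcs, ∀ b ∈ arcs, ¬ Cross a b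
  orbit_count : ∃ reps : Finset Arc, reps.card = p + q ∧ ↑reps ⊆ arcs ∧
      (∀ a ∈ arcs, ∃ r ∈ reps, SameOrbit m p q a r) ∧
      (∀ r ∈ reps, ∀ r' ∈ reps, SameOrbit m p q r r' → r = r')
  face_card : ∀ F ∈ faces, F.card = m + 2
  face_sides : ∀ F ∈ faces, ∀ s ∈ F,
      (∃ a ∈ arcs, s = Side.arc a) ∨ (∃ i : ℤ, s = Side.botSeg i) ∨ (∃ j : ℤ, s = Side.topSeg j)
  shift_face : ∀ F : Finset Side, F ∈ faces ↔ F.image (shiftSide m p q 1) ∈ faces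
  arc_two_faces : ∀ a ∈ arcs, ∃ F ∈ faces, ∃ G ∈ faces, F ≠ G ∧
      Side.arc a ∈ F ∧ Side.arc a ∈ G ∧ ∀ H ∈ faces, Side.arc a ∈ H → H = F ∨ H = G
  botSeg_face : ∀ i : ℤ, ∃! F : Finset Side, F ∈ faces ∧ Side.botSeg i ∈ F
  topSeg_face : ∀ j : ℤ, ∃! F : Finset Side, F ∈ faces ∧ Side.topSeg j ∈ F
  face_polygon : ∀ F ∈ faces, ∀ pt : Pt,
      (F.filter (fun s => pt ∈ s.endpoints)).card = 0 ∨
      (F.filter (fun s => pt ∈ s.endpoints)).card = 2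

end ClusterAnnulus
namespace ClusterAnnulus

/-! ### Auxiliary machinery for the proof -/

open Finset

attribute [local instance] Classical.propDecidable

namespace IG
/-- degree of a vertex in a finite set of integer intervals -/
noncomputable def degE (E : Finset (ℤ × ℤ)) (z : ℤ) : ℕ :=
  (E.filter (fun e => e.1 = z ∨ e.2 = z)).card

lemma parity (E : Finset (ℤ × ℤ)) (h1 : ∀ e ∈ E, e.1 < e.2)
    (X : Finset ℤ) (hX1 : ∀ z ∈ X, degE E z = 1)
    (hX2 : ∀ z, z ∉ X → degE E z = 0 ∨ degE E z = 2) (j : ℤ) :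
    Even ((E.filter (fun e => e.1 ≤ j ∧ j < e.2)).card + (X.filter (fun z => z ≤ j)).card) := by
  classical
  set V : Finset ℤ := E.biUnion (fun e => {e.1, e.2}) with hV
  have hmemV : ∀ e ∈ E, e.1 ∈ V ∧ e.2 ∈ V := by
    intro e he
    constructor <;> exact mem_biUnion.2 ⟨e, he, by simp⟩
  set A := E.filter (fun e => e.1 ≤ j) with hA
  set B := E.filter (fun e => e.2 ≤ j) with hB
  have hsplit : A.card = B.card + (E.filter (fun e => e.1 ≤ j ∧ j < e.2)).card := by
    have h := Finset.card_filter_add_card_filter_not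
      (s := A) (p := fun e => e.2 ≤ j)
    have e1 : A.filter (fun e => e.2 ≤ j) = B := by
      rw [hA, hB, Finset.filter_filter]
      apply Finset.filter_congr
      intro e he
      constructor
      · rintro ⟨_, h2⟩; exact h2
      · intro h2; exact ⟨le_of_lt (lt_of_lt_of_le (h1 e he) h2), h2⟩
    have e2 : A.filter (fun e => ¬ e.2 ≤ j) = E.filter (fun e => e.1 ≤ j ∧ j < e.2) := by
      rw [hA, Finset.filter_filter]
      apply Finset.filter_congr
      intro e _
      simp [not_le]
    rw [e1, e2] at h
    omega
  have hsum : A.card + B.card = ∑ z ∈ V.filter (fun z => z ≤ j), degE E z := by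
    have hAc : A.card = ∑ e ∈ E, (if e.1 ≤ j then 1 else 0) := by
      rw [hA, Finset.card_filter]
    have hBc : B.card = ∑ e ∈ E, (if e.2 ≤ j then 1 else 0) := by
      rw [hB, Finset.card_filter]
    rw [hAc, hBc, ← Finset.sum_add_distrib]
    have : ∀ z ∈ V.filter (fun z => z ≤ j), degE E z
        = ∑ e ∈ E, (if e.1 = z ∨ e.2 = z then 1 else 0) := by
      intro z _; rw [degE, Finset.card_filter]
    rw [Finset.sum_congr rfl this, Finset.sum_comm]
    apply Finset.sum_congr rfl
    intro e he
    have hne : e.1 ≠ e.2 := ne_of_lt (h1 e he)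
    have : ∀ z ∈ V.filter (fun z => z ≤ j),
        (if e.1 = z ∨ e.2 = z then (1:ℕ) else 0)
        = (if e.1 = z then 1 else 0) + (if e.2 = z then 1 else 0) := by
      intro z _
      by_cases hz1 : e.1 = z <;> by_cases hz2 : e.2 = z <;> simp [hz1, hz2]
      exact hne (hz1.trans hz2.symm)
    rw [Finset.sum_congr rfl this, Finset.sum_add_distrib]
    congr 1
    · rw [Finset.sum_ite_eq (V.filter (fun z => z ≤ j)) e.1 (fun _ => (1:ℕ))]
      by_cases h : e.1 ≤ j <;> simp [h, (hmemV e he).1]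
    · rw [Finset.sum_ite_eq (V.filter (fun z => z ≤ j)) e.2 (fun _ => (1:ℕ))]
      by_cases h : e.2 ≤ j <;> simp [h, (hmemV e he).2]
  have hXsubV : ∀ z ∈ X, z ∈ V := by
    intro z hz
    have h1' := hX1 z hz
    rw [degE] at h1'
    have : (E.filter (fun e => e.1 = z ∨ e.2 = z)).Nonempty := by
      rw [← Finset.card_pos, h1']; omega
    obtain ⟨e, he⟩ := this
    rw [Finset.mem_filter] at he
    rcases he.2 with h | h
    · exact h ▸ (hmemV e he.1).1
    · exact h ▸ (hmemV e he.1).2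
  have hVsplit : ∑ z ∈ V.filter (fun z => z ≤ j), degE E z
      = ∑ z ∈ (V.filter (fun z => z ≤ j)).filter (fun z => z ∈ X), degE E z
      + ∑ z ∈ (V.filter (fun z => z ≤ j)).filter (fun z => z ∉ X), degE E z := by
    exact (Finset.sum_filter_add_sum_filter_not _ _ _).symm
  have hXpart : ∑ z ∈ (V.filter (fun z => z ≤ j)).filter (fun z => z ∈ X), degE E z
      = (X.filter (fun z => z ≤ j)).card := by
    have hseteq : (V.filter (fun z => z ≤ j)).filter (fun z => z ∈ X)
        = X.filter (fun z => z ≤ j) := by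
      ext z
      simp only [Finset.mem_filter]
      constructor
      · rintro ⟨⟨_, hzj⟩, hzX⟩; exact ⟨hzX, hzj⟩
      · rintro ⟨hzX, hzj⟩; exact ⟨⟨hXsubV z hzX, hzj⟩, hzX⟩
    rw [hseteq, Finset.card_eq_sum_ones]
    apply Finset.sum_congr rfl
    intro z hz
    exact hX1 z (Finset.mem_filter.1 hz).1
  have hrest : Even (∑ z ∈ (V.filter (fun z => z ≤ j)).filter (fun z => z ∉ X), degE E z) := by
    apply Finset.even_sum
    intro z hz
    rcases hX2 z (Finset.mem_filter.1 hz).2 with h | h <;> rw [h] <;> simp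
  rw [Nat.even_iff] at hrest ⊢
  omega

lemma chain (E : Finset (ℤ × ℤ))
    (h2 : ∀ e ∈ E, ∀ f ∈ E, ¬(e.1 < f.1 ∧ f.1 < e.2 ∧ e.2 < f.2))
    (lam D : ℤ) (hD : 0 < D)
    (h3a : ∀ e ∈ E, ¬(e.1 < lam ∧ lam < e.2))
    (h3b : ∀ e ∈ E, ¬(e.1 < lam + D ∧ lam + D < e.2))
    (hcov : ∀ j, lam ≤ j → j < lam + D → ∃ e ∈ E, e.1 ≤ j ∧ j < e.2) :
    ∃ (l : ℕ) (s : ℕ → ℤ), 1 ≤ l ∧ s 0 = lam ∧ s l = lam + D ∧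
      ∀ i < l, s i < s (i+1) ∧ (s i, s (i+1)) ∈ E := by
  classical
  suffices H : ∀ n : ℕ, ∀ s0 : ℤ, lam ≤ s0 → s0 < lam + D → (lam + D - s0).toNat ≤ n →
      (∀ e ∈ E, e.1 ≤ s0 → s0 < e.2 → e.1 = s0) →
      ∃ (l : ℕ) (s : ℕ → ℤ), 1 ≤ l ∧ s 0 = s0 ∧ s l = lam + D ∧
        ∀ i < l, s i < s (i+1) ∧ (s i, s (i+1)) ∈ E by
    refine H (lam + D - lam).toNat lam le_rfl (by omega) (by omega) ?_
    intro e he h1e h2e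
    by_contra hne
    exact h3a e he ⟨lt_of_le_of_ne h1e hne, h2e⟩
  intro n
  induction n with
  | zero => intro s0 hs1 hs2 hmeas _; omega
  | succ n ih =>
    intro s0 hs1 hs2 hmeas hstart
    obtain ⟨e0, he0, hc1, hc2⟩ := hcov s0 hs1 hs2
    set Cov := E.filter (fun e => e.1 ≤ s0 ∧ s0 < e.2) with hCov
    have hCovne : Cov.Nonempty := ⟨e0, by simp [hCov, Finset.mem_filter, he0, hc1, hc2]⟩
    obtain ⟨ehat, hehat, hmax⟩ := Cov.exists_max_image Prod.snd hCovne
    rw [hCov, Finset.mem_filter] at hehat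
    obtain ⟨hehatE, hehat1, hehat2⟩ := hehat
    have hehat1' : ehat.1 = s0 := hstart ehat hehatE hehat1 hehat2
    set s1 := ehat.2 with hs1def
    have hs1gt : s0 < s1 := hehat2
    have hs1le : s1 ≤ lam + D := by
      by_contra hgt
      push_neg at hgt
      exact h3b ehat hehatE ⟨by omega, hgt⟩
    by_cases hend : s1 = lam + D
    · refine ⟨1, fun i => if i = 0 then s0 else lam + D, le_rfl, by simp, by simp, ?_⟩
      intro i hi
      interval_cases i
      norm_num
      refine ⟨by omega, ?_⟩
      have heq : ((s0 : ℤ), lam + D) = ehat := by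
        rw [← hehat1', ← hend, hs1def]
      rw [heq]; exact hehatE
    · have hs1lt : s1 < lam + D := lt_of_le_of_ne hs1le hend
      have hstart1 : ∀ f ∈ E, f.1 ≤ s1 → s1 < f.2 → f.1 = s1 := by
        intro f hf hf1 hf2
        by_contra hne
        have hf1' : f.1 < s1 := lt_of_le_of_ne hf1 hne
        rcases le_or_gt f.1 s0 with hle | hgt
        · have : f ∈ Cov := by
            rw [hCov, Finset.mem_filter]
            exact ⟨hf, hle, by omega⟩
          have := hmax f this
          omega
        · exact h2 ehat hehatE f hf ⟨by omega, by omega, by omega⟩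
      obtain ⟨l', s', hl', hs'0, hs'end, hs'step⟩ :=
        ih s1 (by omega) hs1lt (by omega) hstart1
      refine ⟨l' + 1, fun i => if i = 0 then s0 else s' (i - 1), by omega, by simp, ?_, ?_⟩
      · simp only [if_neg (by omega : l' + 1 ≠ 0)]
        simpa using hs'end
      · intro i hi
        rcases Nat.eq_zero_or_pos i with h0 | hpos
        · subst h0
          norm_num
          refine ⟨by rw [hs'0]; omega, ?_⟩
          have heq : ((s0 : ℤ), s' 0) = ehat := by
            rw [hs'0, ← hehat1', hs1def]
          rw [heq]; exact hehatE
        · have hi1 : i ≠ 0 := by omega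
          have hi2 : i + 1 ≠ 0 := by omega
          simp only [if_neg hi1, if_neg hi2]
          have : i + 1 - 1 = (i - 1) + 1 := by omega
          rw [this]
          exact hs'step (i - 1) (by omega)

lemma dvd_of_emod_one {a : ℤ} {m : ℕ} (h : a % (m:ℤ) = 1) : (m:ℤ) ∣ (a - 1) := by
  have := Int.emod_def a (m:ℤ)
  exact ⟨a / (m:ℤ), by omega⟩

lemma chain_count (E : Finset (ℤ × ℤ)) (m : ℕ) (lam D : ℤ)
    (hD : (D : ℤ) % (m:ℤ) = 0)
    (h6 : ∀ e ∈ E, (e.2 - e.1) % (m:ℤ) = 1)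
    (l : ℕ) (s : ℕ → ℤ) (hl : 1 ≤ l) (h0 : s 0 = lam) (hend : s l = lam + D)
    (hstep : ∀ i < l, s i < s (i+1) ∧ (s i, s (i+1)) ∈ E) : m ≤ E.card := by
  classical
  have hres : ∀ i, i ≤ l → (m:ℤ) ∣ (s i - lam - i) := by
    intro i
    induction i with
    | zero => intro _; simp [h0]
    | succ i ih =>
      intro hi
      have h1 := ih (by omega)
      have h2 := hstep i (by omega)
      have h3 : (m:ℤ) ∣ (s (i+1) - s i - 1) := dvd_of_emod_one (h6 _ h2.2)
      have : s (i+1) - lam - (i+1 : ℕ) = (s i - lam - i) + (s (i+1) - s i - 1) := by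
        push_cast; ring
      rw [this]
      exact dvd_add h1 h3
  have hDdvd : (m:ℤ) ∣ D := Int.dvd_of_emod_eq_zero hD
  have hldvd : (m:ℤ) ∣ (l:ℤ) := by
    have := hres l le_rfl
    rw [hend] at this
    have h4 : (m:ℤ) ∣ (D - l) := by simpa using this
    have := dvd_sub hDdvd h4
    simpa using this
  have hml : m ∣ l := by exact_mod_cast hldvd
  have hmle : m ≤ l := Nat.le_of_dvd (by omega) hml
  have hmono : ∀ i j, i < j → j ≤ l → s i < s j := by
    intro i j hij hjl
    induction j with
    | zero => omega
    | succ j ihj =>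
      rcases Nat.lt_or_ge i j with h | h
      · have := ihj (by omega) (by omega)
        have := (hstep j (by omega)).1
        omega
      · have : i = j := by omega
        subst this
        exact (hstep i (by omega)).1
  have hinj : Set.InjOn (fun i => (s i, s (i+1))) (Finset.range l) := by
    intro i hi j hj hij
    simp only [Finset.mem_coe, Finset.mem_range] at hi hj
    have : s i = s j := congrArg Prod.fst hij
    by_contra hne
    rcases Nat.lt_or_ge i j with h | h
    · have := hmono i j h (by omega); omega
    · have := hmono j i (by omega) (by omega); omega
  have hmaps : ∀ i ∈ Finset.range l, (s i, s (i+1)) ∈ E := by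
    intro i hi
    exact (hstep i (Finset.mem_range.1 hi)).2
  have := Finset.card_le_card_of_injOn _ hmaps hinj
  rw [Finset.card_range] at this
  omega

end IG

/-! ### Side classification and face combinatorics -/

def isBotS : Side → Prop
  | .botSeg _ => True
  | .arc (.botPeriph _ _) => True
  | _ => False

def isTopS : Side → Prop
  | .topSeg _ => True
  | .arc (.topPeriph _ _) => True
  | _ => False

def isBridgeS : Side → Prop
  | .arc (.bridging _ _) => True
  | _ => False

def botPair : Side → ℤ × ℤ
  | .botSeg i => (i, i + 1)
  | .arc (.botPeriph u v) => (u, v)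
  | _ => (0, 1)

def topPair : Side → ℤ × ℤ
  | .topSeg i => (i, i + 1)
  | .arc (.topPeriph u v) => (u, v)
  | _ => (0, 1)

noncomputable def botE (H : Finset Side) : Finset (ℤ × ℤ) := (H.filter isBotS).image botPair

noncomputable def topE (H : Finset Side) : Finset (ℤ × ℤ) := (H.filter isTopS).image topPair

lemma botS_cases {s : Side} (hb : isBotS s) :
    (∃ i, s = Side.botSeg i) ∨ (∃ u v, s = Side.arc (Arc.botPeriph u v)) := by
  cases s with
  | botSeg i => exact Or.inl ⟨i, rfl⟩
  | topSeg j => exact absurd hb (by simp [isBotS])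
  | arc a =>
    cases a with
    | botPeriph u v => exact Or.inr ⟨u, v, rfl⟩
    | bridging x y => exact absurd hb (by simp [isBotS])
    | topPeriph u v => exact absurd hb (by simp [isBotS])

lemma topS_cases {s : Side} (hb : isTopS s) :
    (∃ i, s = Side.topSeg i) ∨ (∃ u v, s = Side.arc (Arc.topPeriph u v)) := by
  cases s with
  | topSeg i => exact Or.inl ⟨i, rfl⟩
  | botSeg j => exact absurd hb (by simp [isTopS])
  | arc a =>
    cases a with
    | topPeriph u v => exact Or.inr ⟨u, v, rfl⟩
    | bridging x y => exact absurd hb (by simp [isTopS])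
    | botPeriph u v => exact absurd hb (by simp [isTopS])

lemma shiftArc_add (m p q : ℕ) (n k : ℤ) (a : Arc) :
    shiftArc m p q k (shiftArc m p q n a) = shiftArc m p q (n + k) a := by
  cases a <;> simp only [shiftArc, Arc.bridging.injEq, Arc.botPeriph.injEq, Arc.topPeriph.injEq] <;> constructor <;> ring

lemma shiftArc_zero (m p q : ℕ) (a : Arc) : shiftArc m p q 0 a = a := by
  cases a <;> simp [shiftArc]

lemma mem_shiftArc {m p q : ℕ} (Γ : Angulation m p q) :
    ∀ (n : ℤ) (a : Arc), a ∈ Γ.arcs → shiftArc m p q n a ∈ Γ.arcs := by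
  intro n
  induction n using Int.induction_on with
  | zero => intro a ha; rwa [shiftArc_zero]
  | succ i ih =>
    intro a ha
    have h := (Γ.shift_mem (shiftArc m p q i a)).mp (ih a ha)
    rwa [shiftArc_add] at h
  | pred i ih =>
    intro a ha
    have h := ih a ha
    apply (Γ.shift_mem (shiftArc m p q (-(i:ℤ) - 1) a)).mpr
    rw [shiftArc_add]
    have heq : (-(i:ℤ) - 1) + 1 = -(i:ℤ) := by ring
    rwa [heq]

section FaceLemmas

variable {m p q : ℕ} (Γ : Angulation m p q)

lemma arc_mem_of_face {H : Finset Side} (hH : H ∈ Γ.faces) {a : Arc}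
    (hs : Side.arc a ∈ H) : a ∈ Γ.arcs := by
  rcases Γ.face_sides H hH _ hs with ⟨b, hb, hba⟩ | ⟨i, hi⟩ | ⟨j, hj⟩
  · injection hba with h; rw [h]; exact hb
  · simp at hi
  · simp at hj

lemma botPeriph_marc {H : Finset Side} (hH : H ∈ Γ.faces) {u v : ℤ}
    (hs : Side.arc (Arc.botPeriph u v) ∈ H) :
    ∃ k : ℤ, 1 ≤ k ∧ v = u + k * (m:ℤ) + 1 := by
  have := Γ.marc _ (arc_mem_of_face Γ hH hs)
  simpa [IsMArc] using this

lemma topPeriph_marc {H : Finset Side} (hH : H ∈ Γ.faces) {u v : ℤ}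
    (hs : Side.arc (Arc.topPeriph u v) ∈ H) :
    ∃ k : ℤ, 1 ≤ k ∧ v = u + k * (m:ℤ) + 1 := by
  have := Γ.marc _ (arc_mem_of_face Γ hH hs)
  simpa [IsMArc] using this

lemma one_mod_m {m : ℕ} (hm : 2 ≤ m) : (1:ℤ) % (m:ℤ) = 1 :=
  Int.emod_eq_of_lt (by norm_num) (by exact_mod_cast hm)

lemma km_add_one_mod {m : ℕ} (hm : 2 ≤ m) (k : ℤ) : (k * (m:ℤ) + 1) % (m:ℤ) = 1 := by
  have h : k * (m:ℤ) + 1 = 1 + (m:ℤ) * k := by ring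
  rw [h, Int.add_mul_emod_self_left, one_mod_m hm]

lemma botPair_lt {H : Finset Side} (hH : H ∈ Γ.faces) (hm : 2 ≤ m) {s : Side}
    (hs : s ∈ H) (hb : isBotS s) : (botPair s).1 < (botPair s).2 := by
  rcases botS_cases hb with ⟨i, rfl⟩ | ⟨u, v, rfl⟩
  · simp [botPair]
  · obtain ⟨k, hk, hv⟩ := botPeriph_marc Γ hH hs
    simp only [botPair]
    have : (2:ℤ) ≤ (m:ℤ) := by exact_mod_cast hm
    nlinarith

lemma botPair_mod {H : Finset Side} (hH : H ∈ Γ.faces) (hm : 2 ≤ m) {s : Side}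
    (hs : s ∈ H) (hb : isBotS s) : ((botPair s).2 - (botPair s).1) % (m:ℤ) = 1 := by
  rcases botS_cases hb with ⟨i, rfl⟩ | ⟨u, v, rfl⟩
  · simp only [botPair]
    have : (i + 1 - i : ℤ) = 1 := by ring
    rw [this, one_mod_m hm]
  · obtain ⟨k, hk, hv⟩ := botPeriph_marc Γ hH hs
    simp only [botPair, hv]
    have : (u + k * (m:ℤ) + 1 - u) = k * (m:ℤ) + 1 := by ring
    rw [this, km_add_one_mod hm]

lemma topPair_lt {H : Finset Side} (hH : H ∈ Γ.faces) (hm : 2 ≤ m) {s : Side}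
    (hs : s ∈ H) (hb : isTopS s) : (topPair s).1 < (topPair s).2 := by
  rcases topS_cases hb with ⟨i, rfl⟩ | ⟨u, v, rfl⟩
  · simp [topPair]
  · obtain ⟨k, hk, hv⟩ := topPeriph_marc Γ hH hs
    simp only [topPair]
    have : (2:ℤ) ≤ (m:ℤ) := by exact_mod_cast hm
    nlinarith

lemma topPair_mod {H : Finset Side} (hH : H ∈ Γ.faces) (hm : 2 ≤ m) {s : Side}
    (hs : s ∈ H) (hb : isTopS s) : ((topPair s).2 - (topPair s).1) % (m:ℤ) = 1 := by
  rcases topS_cases hb with ⟨i, rfl⟩ | ⟨u, v, rfl⟩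
  · simp only [topPair]
    have : (i + 1 - i : ℤ) = 1 := by ring
    rw [this, one_mod_m hm]
  · obtain ⟨k, hk, hv⟩ := topPeriph_marc Γ hH hs
    simp only [topPair, hv]
    have : (u + k * (m:ℤ) + 1 - u) = k * (m:ℤ) + 1 := by ring
    rw [this, km_add_one_mod hm]

end FaceLemmas

/-! ### Endpoint bookkeeping -/

lemma bot_mem_endpoints {s : Side} (hb : isBotS s) (z : ℤ) :
    Pt.bot z ∈ s.endpoints ↔ ((botPair s).1 = z ∨ (botPair s).2 = z) := by
  rcases botS_cases hb with ⟨i, rfl⟩ | ⟨u, v, rfl⟩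
  · simp [Side.endpoints, botPair, eq_comm]
  · simp [Side.endpoints, Arc.endpoints, botPair, eq_comm]

lemma top_mem_endpoints {s : Side} (hb : isTopS s) (z : ℤ) :
    Pt.top z ∈ s.endpoints ↔ ((topPair s).1 = z ∨ (topPair s).2 = z) := by
  rcases topS_cases hb with ⟨i, rfl⟩ | ⟨u, v, rfl⟩
  · simp [Side.endpoints, topPair, eq_comm]
  · simp [Side.endpoints, Arc.endpoints, topPair, eq_comm]

section FaceLemmas2

variable {m p q : ℕ} (Γ : Angulation m p q)

lemma botPair_injOn {H : Finset Side} (hH : H ∈ Γ.faces) (hm : 2 ≤ m) :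
    Set.InjOn botPair (H.filter isBotS : Finset Side) := by
  intro s hs t ht hst
  simp only [Finset.coe_filter, Set.mem_setOf_eq] at hs ht
  rcases botS_cases hs.2 with ⟨i, rfl⟩ | ⟨u, v, rfl⟩ <;>
    rcases botS_cases ht.2 with ⟨i', rfl⟩ | ⟨u', v', rfl⟩
  · simp only [botPair, Prod.mk.injEq] at hst
    rw [hst.1]
  · obtain ⟨k, hk, hv⟩ := botPeriph_marc Γ hH ht.1
    simp only [botPair, Prod.mk.injEq] at hst
    have : (2:ℤ) ≤ (m:ℤ) := by exact_mod_cast hm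
    exfalso; nlinarith [hst.1, hst.2]
  · obtain ⟨k, hk, hv⟩ := botPeriph_marc Γ hH hs.1
    simp only [botPair, Prod.mk.injEq] at hst
    have : (2:ℤ) ≤ (m:ℤ) := by exact_mod_cast hm
    exfalso; nlinarith [hst.1, hst.2]
  · simp only [botPair, Prod.mk.injEq] at hst
    rw [hst.1, hst.2]

lemma topPair_injOn {H : Finset Side} (hH : H ∈ Γ.faces) (hm : 2 ≤ m) :
    Set.InjOn topPair (H.filter isTopS : Finset Side) := by
  intro s hs t ht hst
  simp only [Finset.coe_filter, Set.mem_setOf_eq] at hs ht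
  rcases topS_cases hs.2 with ⟨i, rfl⟩ | ⟨u, v, rfl⟩ <;>
    rcases topS_cases ht.2 with ⟨i', rfl⟩ | ⟨u', v', rfl⟩
  · simp only [topPair, Prod.mk.injEq] at hst
    rw [hst.1]
  · obtain ⟨k, hk, hv⟩ := topPeriph_marc Γ hH ht.1
    simp only [topPair, Prod.mk.injEq] at hst
    have : (2:ℤ) ≤ (m:ℤ) := by exact_mod_cast hm
    exfalso; nlinarith [hst.1, hst.2]
  · obtain ⟨k, hk, hv⟩ := topPeriph_marc Γ hH hs.1
    simp only [topPair, Prod.mk.injEq] at hst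
    have : (2:ℤ) ≤ (m:ℤ) := by exact_mod_cast hm
    exfalso; nlinarith [hst.1, hst.2]
  · simp only [topPair, Prod.mk.injEq] at hst
    rw [hst.1, hst.2]

lemma degE_botE {H : Finset Side} (hH : H ∈ Γ.faces) (hm : 2 ≤ m) (z : ℤ) :
    IG.degE (botE H) z
      = (H.filter (fun s => isBotS s ∧ Pt.bot z ∈ s.endpoints)).card := by
  classical
  rw [IG.degE, botE, Finset.filter_image]
  rw [Finset.card_image_of_injOn
    ((botPair_injOn Γ hH hm).mono (by intro x hx; simp only [Finset.coe_filter,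
      Set.mem_setOf_eq, Finset.mem_coe, Finset.mem_filter] at hx ⊢; exact hx.1))]
  rw [Finset.filter_filter]
  congr 1
  apply Finset.filter_congr
  intro s _
  constructor
  · rintro ⟨hb, hz⟩
    exact ⟨hb, (bot_mem_endpoints hb z).2 hz⟩
  · rintro ⟨hb, hz⟩
    exact ⟨hb, (bot_mem_endpoints hb z).1 hz⟩

lemma degE_topE {H : Finset Side} (hH : H ∈ Γ.faces) (hm : 2 ≤ m) (z : ℤ) :
    IG.degE (topE H) z
      = (H.filter (fun s => isTopS s ∧ Pt.top z ∈ s.endpoints)).card := by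
  classical
  rw [IG.degE, topE, Finset.filter_image]
  rw [Finset.card_image_of_injOn
    ((topPair_injOn Γ hH hm).mono (by intro x hx; simp only [Finset.coe_filter,
      Set.mem_setOf_eq, Finset.mem_coe, Finset.mem_filter] at hx ⊢; exact hx.1))]
  rw [Finset.filter_filter]
  congr 1
  apply Finset.filter_congr
  intro s _
  constructor
  · rintro ⟨hb, hz⟩
    exact ⟨hb, (top_mem_endpoints hb z).2 hz⟩
  · rintro ⟨hb, hz⟩
    exact ⟨hb, (top_mem_endpoints hb z).1 hz⟩

end FaceLemmas2

/-- split of the sides incident to a bottom point into bottom sides and bridging sides -/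
lemma atbot_split (H : Finset Side) (z : ℤ) :
    (H.filter (fun s => Pt.bot z ∈ s.endpoints)).card
      = (H.filter (fun s => isBotS s ∧ Pt.bot z ∈ s.endpoints)).card
      + (H.filter (fun s => ∃ x y, s = Side.arc (Arc.bridging x y) ∧ x = z)).card := by
  classical
  have h := Finset.card_filter_add_card_filter_not
    (s := H.filter (fun s => Pt.bot z ∈ s.endpoints)) (p := isBotS)
  rw [Finset.filter_filter, Finset.filter_filter] at h
  have e1 : H.filter (fun s => Pt.bot z ∈ s.endpoints ∧ isBotS s)
      = H.filter (fun s => isBotS s ∧ Pt.bot z ∈ s.endpoints) := by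
    apply Finset.filter_congr; intro s _; exact and_comm
  have e2 : H.filter (fun s => Pt.bot z ∈ s.endpoints ∧ ¬ isBotS s)
      = H.filter (fun s => ∃ x y, s = Side.arc (Arc.bridging x y) ∧ x = z) := by
    apply Finset.filter_congr; intro s _
    cases s with
    | botSeg i => simp [isBotS]
    | topSeg j => simp [Side.endpoints]
    | arc a =>
      cases a with
      | bridging x y =>
        simp only [isBotS, not_false_iff, and_true, Side.endpoints, Arc.endpoints]
        constructor
        · intro hmem
          rcases Finset.mem_insert.1 hmem with h | h
          · injection h with h'; exact ⟨x, y, rfl, h'.symm⟩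
          · rw [Finset.mem_singleton] at h; cases h
        · rintro ⟨x', y', heq, hz'⟩
          injection heq with h'
          injection h' with h1 h2
          subst h1; subst hz'
          exact Finset.mem_insert_self _ _
      | botPeriph u v => simp [isBotS]
      | topPeriph u v => simp [Side.endpoints, Arc.endpoints]
  rw [e1, e2] at h
  omega

/-- split of the sides incident to a top point into top sides and bridging sides -/
lemma attop_split (H : Finset Side) (z : ℤ) :
    (H.filter (fun s => Pt.top z ∈ s.endpoints)).card
      = (H.filter (fun s => isTopS s ∧ Pt.top z ∈ s.endpoints)).card
      + (H.filter (fun s => ∃ x y, s = Side.arc (Arc.bridging x y) ∧ y = z)).card := by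
  classical
  have h := Finset.card_filter_add_card_filter_not
    (s := H.filter (fun s => Pt.top z ∈ s.endpoints)) (p := isTopS)
  rw [Finset.filter_filter, Finset.filter_filter] at h
  have e1 : H.filter (fun s => Pt.top z ∈ s.endpoints ∧ isTopS s)
      = H.filter (fun s => isTopS s ∧ Pt.top z ∈ s.endpoints) := by
    apply Finset.filter_congr; intro s _; exact and_comm
  have e2 : H.filter (fun s => Pt.top z ∈ s.endpoints ∧ ¬ isTopS s)
      = H.filter (fun s => ∃ x y, s = Side.arc (Arc.bridging x y) ∧ y = z) := by
    apply Finset.filter_congr; intro s _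
    cases s with
    | topSeg i => simp [isTopS]
    | botSeg j => simp [Side.endpoints]
    | arc a =>
      cases a with
      | bridging x y =>
        simp only [isTopS, not_false_iff, and_true, Side.endpoints, Arc.endpoints]
        constructor
        · intro hmem
          rcases Finset.mem_insert.1 hmem with h | h
          · cases h
          · rw [Finset.mem_singleton] at h
            injection h with h'; exact ⟨x, y, rfl, h'.symm⟩
        · rintro ⟨x', y', heq, hz'⟩
          injection heq with h'
          injection h' with h1 h2
          subst h2; subst hz'
          apply Finset.mem_insert.2
          right; exact Finset.mem_singleton_self _
      | topPeriph u v => simp [isTopS]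
      | botPeriph u v => simp [Side.endpoints, Arc.endpoints]
  rw [e1, e2] at h
  omega

/-! ### Case B: a single orbit of bridging arcs is impossible -/

def brFoot : Side → ℤ
  | .arc (.bridging x _) => x
  | _ => 0

def brTop : Side → ℤ
  | .arc (.bridging _ y) => y
  | _ => 0

lemma bridgeS_cases {s : Side} (h : isBridgeS s) :
    ∃ x y, s = Side.arc (Arc.bridging x y) := by
  cases s with
  | botSeg i => exact absurd h (by simp [isBridgeS])
  | topSeg j => exact absurd h (by simp [isBridgeS])
  | arc a =>
    cases a with
    | bridging x y => exact ⟨x, y, rfl⟩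
    | botPeriph u v => exact absurd h (by simp [isBridgeS])
    | topPeriph u v => exact absurd h (by simp [isBridgeS])

section CaseB

variable {m p q : ℕ} (Γ : Angulation m p q)

lemma caseB_bot (hm : 2 ≤ m) (hp : 1 ≤ p) (x0 y0 : ℤ)
    (hall : ∀ x y, Arc.bridging x y ∈ Γ.arcs →
      ∃ n : ℤ, x = x0 + n * ((m:ℤ) * p) ∧ y = y0 + n * ((m:ℤ) * q))
    (F : Finset Side) (hF : F ∈ Γ.faces)
    (hBF : Side.arc (Arc.bridging x0 y0) ∈ F) :
    m ≤ (F.filter isBotS).card := by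
  classical
  set E := botE F with hE
  set Dmp : ℤ := (m:ℤ) * p with hDmp
  have hDpos : 0 < Dmp := by
    rw [hDmp]
    have h1 : (0:ℤ) < (m:ℤ) := by exact_mod_cast (by omega : 0 < m)
    have h2 : (0:ℤ) < (p:ℤ) := by exact_mod_cast (by omega : 0 < p)
    positivity
  -- membership in E
  have hEmem : ∀ e ∈ E, ∃ s, s ∈ F ∧ isBotS s ∧ botPair s = e := by
    intro e he
    rw [hE, botE] at he
    obtain ⟨s, hs, hse⟩ := Finset.mem_image.1 he
    rw [Finset.mem_filter] at hs
    exact ⟨s, hs.1, hs.2, hse⟩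
  have h1E : ∀ e ∈ E, e.1 < e.2 := by
    intro e he
    obtain ⟨s, hsF, hsb, hse⟩ := hEmem e he
    rw [← hse]; exact botPair_lt Γ hF hm hsF hsb
  have h6E : ∀ e ∈ E, (e.2 - e.1) % (m:ℤ) = 1 := by
    intro e he
    obtain ⟨s, hsF, hsb, hse⟩ := hEmem e he
    rw [← hse]; exact botPair_mod Γ hF hm hsF hsb
  have h2E : ∀ e ∈ E, ∀ f ∈ E, ¬(e.1 < f.1 ∧ f.1 < e.2 ∧ e.2 < f.2) := by
    intro e he f hf hcr
    obtain ⟨s, hsF, hsb, hse⟩ := hEmem e he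
    obtain ⟨t, htF, htb, hte⟩ := hEmem f hf
    rcases botS_cases hsb with ⟨i, rfl⟩ | ⟨u, v, rfl⟩
    · rw [← hse] at hcr; simp only [botPair] at hcr; omega
    · rcases botS_cases htb with ⟨i', rfl⟩ | ⟨u', v', rfl⟩
      · rw [← hse, ← hte] at hcr; simp only [botPair] at hcr; omega
      · have ha := arc_mem_of_face Γ hF hsF
        have hb := arc_mem_of_face Γ hF htF
        rw [← hse, ← hte] at hcr
        simp only [botPair] at hcr
        exact Γ.noncross _ ha _ hb (Or.inl hcr)
  -- no edge straddles a point of the bottom foot lattice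
  have hstrad : ∀ (n : ℤ) (e : ℤ × ℤ), e ∈ E → ¬(e.1 < x0 + n * Dmp ∧ x0 + n * Dmp < e.2) := by
    intro n e he hcr
    obtain ⟨s, hsF, hsb, hse⟩ := hEmem e he
    have hBn : Arc.bridging (x0 + n * Dmp) (y0 + n * ((m:ℤ) * q)) ∈ Γ.arcs := by
      have hBarc : Arc.bridging x0 y0 ∈ Γ.arcs := by
        have ⟨n0, hn0⟩ := hall x0 y0 ?_
        · exact arc_mem_of_face Γ hF hBF
        · exact arc_mem_of_face Γ hF hBF
      have := mem_shiftArc Γ n _ hBarc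
      simpa [shiftArc, hDmp] using this
    rcases botS_cases hsb with ⟨i, rfl⟩ | ⟨u, v, rfl⟩
    · rw [← hse] at hcr; simp only [botPair] at hcr; omega
    · have ha := arc_mem_of_face Γ hF hsF
      rw [← hse] at hcr
      simp only [botPair] at hcr
      exact Γ.noncross _ ha _ hBn hcr
  -- the set of feet of bridging sides of F
  set X : Finset ℤ := (F.filter isBridgeS).image brFoot with hX
  have hXmem : ∀ z, z ∈ X ↔ ∃ y, Side.arc (Arc.bridging z y) ∈ F := by
    intro z
    rw [hX]
    constructor
    · intro hz
      obtain ⟨s, hs, hsz⟩ := Finset.mem_image.1 hz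
      rw [Finset.mem_filter] at hs
      obtain ⟨x, y, rfl⟩ := bridgeS_cases hs.2
      simp only [brFoot] at hsz
      subst hsz
      exact ⟨y, hs.1⟩
    · rintro ⟨y, hy⟩
      apply Finset.mem_image.2
      refine ⟨Side.arc (Arc.bridging z y), ?_, rfl⟩
      rw [Finset.mem_filter]
      exact ⟨hy, by simp [isBridgeS]⟩
  -- the count of bridging sides of F at a given foot
  have hbrcount : ∀ z : ℤ,
      (F.filter (fun s => ∃ x y, s = Side.arc (Arc.bridging x y) ∧ x = z)).card
        = (if z ∈ X then 1 else 0) := by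
    intro z
    by_cases hz : z ∈ X
    · rw [if_pos hz]
      obtain ⟨y, hy⟩ := (hXmem z).1 hz
      rw [Finset.card_eq_one]
      refine ⟨Side.arc (Arc.bridging z y), ?_⟩
      ext s
      rw [Finset.mem_filter, Finset.mem_singleton]
      constructor
      · rintro ⟨hsF, x', y', rfl, rfl⟩
        -- another bridging side at the same foot must coincide
        have h1 := hall x' y' (arc_mem_of_face Γ hF hsF)
        have h2 := hall x' y (arc_mem_of_face Γ hF hy)
        obtain ⟨n1, hn1, hn1'⟩ := h1
        obtain ⟨n2, hn2, hn2'⟩ := h2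
        have hn12 : n1 = n2 := by
          have h3 : x0 + n1 * ((m:ℤ)*p) = x0 + n2 * ((m:ℤ)*p) := by rw [← hn1, ← hn2]
          have h3' : n1 * ((m:ℤ)*p) = n2 * ((m:ℤ)*p) := by linarith
          have h4 : (0:ℤ) < (m:ℤ)*p := hDmp ▸ hDpos
          exact mul_right_cancel₀ (ne_of_gt h4) h3'
        subst hn12
        have hyy : y' = y := by rw [hn1', hn2']
        rw [hyy]
      · rintro rfl
        exact ⟨hy, z, y, rfl, rfl⟩
    · rw [if_neg hz]
      rw [Finset.card_eq_zero, Finset.filter_eq_empty_iff]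
      rintro s hsF ⟨x', y', rfl, rfl⟩
      exact hz ((hXmem x').2 ⟨y', hsF⟩)
  -- degrees
  have hdeg : ∀ z : ℤ, IG.degE E z + (if z ∈ X then 1 else 0)
      = (F.filter (fun s => Pt.bot z ∈ s.endpoints)).card := by
    intro z
    rw [hE, degE_botE Γ hF hm z, atbot_split F z, hbrcount z]
  have hX1 : ∀ z ∈ X, IG.degE E z = 1 := by
    intro z hz
    have h := hdeg z
    rw [if_pos hz] at h
    rcases Γ.face_polygon F hF (Pt.bot z) with h0 | h2
    · omega
    · omega
  have hX2 : ∀ z, z ∉ X → IG.degE E z = 0 ∨ IG.degE E z = 2 := by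
    intro z hz
    have h := hdeg z
    rw [if_neg hz] at h
    rcases Γ.face_polygon F hF (Pt.bot z) with h0 | h2
    · left; omega
    · right; omega
  -- X is nonempty and even, hence has at least two elements
  have hx0X : x0 ∈ X := (hXmem x0).2 ⟨y0, hBF⟩
  have hXne : X.Nonempty := ⟨x0, hx0X⟩
  have hXeven : Even X.card := by
    set jbig := ((E.image Prod.snd) ∪ X).max' (by
      refine Finset.Nonempty.mono (Finset.subset_union_right) hXne) with hjbig
    have hpar := IG.parity E h1E X hX1 hX2 jbig
    have hc0 : E.filter (fun e => e.1 ≤ jbig ∧ jbig < e.2) = ∅ := by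
      rw [Finset.filter_eq_empty_iff]
      intro e he hcr
      have : e.2 ∈ (E.image Prod.snd) ∪ X :=
        Finset.mem_union_left _ (Finset.mem_image_of_mem _ he)
      have := Finset.le_max' _ _ this
      omega
    have hXall : X.filter (fun z => z ≤ jbig) = X := by
      apply Finset.filter_true_of_mem
      intro z hz
      exact Finset.le_max' _ _ (Finset.mem_union_right _ hz)
    rw [hc0, hXall] at hpar
    simpa using hpar
  have hX2card : 2 ≤ X.card := by
    have h1 : 1 ≤ X.card := Finset.card_pos.2 hXne
    rw [Nat.even_iff] at hXeven
    omega
  -- the two smallest feet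
  set x1 := X.min' hXne with hx1
  have hx1X : x1 ∈ X := X.min'_mem hXne
  have hEne : (X.erase x1).Nonempty := by
    rw [← Finset.card_pos, Finset.card_erase_of_mem hx1X]
    omega
  set x2 := (X.erase x1).min' hEne with hx2
  have hx2X' : x2 ∈ X.erase x1 := Finset.min'_mem _ hEne
  have hx2X : x2 ∈ X := (Finset.mem_erase.1 hx2X').2
  have hx2ne : x2 ≠ x1 := (Finset.mem_erase.1 hx2X').1
  have hx1le : ∀ z ∈ X, x1 ≤ z := fun z hz => X.min'_le z hz
  have hx2le : ∀ z ∈ X, z ≠ x1 → x2 ≤ z := by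
    intro z hz hne
    exact (X.erase x1).min'_le z (Finset.mem_erase.2 ⟨hne, hz⟩)
  -- lattice structure of X
  have hlat : ∀ z ∈ X, ∃ n : ℤ, z = x0 + n * Dmp := by
    intro z hz
    obtain ⟨y, hy⟩ := (hXmem z).1 hz
    obtain ⟨n, hn, _⟩ := hall z y (arc_mem_of_face Γ hF hy)
    exact ⟨n, by rw [hDmp]; exact hn⟩
  obtain ⟨n1, hn1⟩ := hlat x1 hx1X
  obtain ⟨n2, hn2⟩ := hlat x2 hx2X
  have hx1x2 : x1 + Dmp ≤ x2 := by
    have hlt : x1 < x2 := lt_of_le_of_ne (hx1le x2 hx2X) (Ne.symm hx2ne)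
    have hd : 0 < (n2 - n1) * Dmp := by nlinarith
    have hn21 : 1 ≤ n2 - n1 := by nlinarith
    nlinarith
  -- coverage of the gap [x1, x1 + Dmp)
  have hcov : ∀ j, x1 ≤ j → j < x1 + Dmp → ∃ e ∈ E, e.1 ≤ j ∧ j < e.2 := by
    intro j hj1 hj2
    have hXj : X.filter (fun z => z ≤ j) = {x1} := by
      ext z
      rw [Finset.mem_filter, Finset.mem_singleton]
      constructor
      · rintro ⟨hzX, hzj⟩
        by_contra hne
        have := hx2le z hzX hne
        omega
      · rintro rfl
        exact ⟨hx1X, hj1⟩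
    have hpar := IG.parity E h1E X hX1 hX2 j
    rw [hXj] at hpar
    simp only [Finset.card_singleton] at hpar
    have hcne : (E.filter (fun e => e.1 ≤ j ∧ j < e.2)).card ≠ 0 := by
      intro h0
      rw [h0] at hpar
      simpa using hpar
    have hpos : 0 < (E.filter (fun e => e.1 ≤ j ∧ j < e.2)).card := by omega
    obtain ⟨e, he⟩ := Finset.card_pos.1 hpos
    rw [Finset.mem_filter] at he
    exact ⟨e, he.1, he.2⟩
  -- chain across the gap
  obtain ⟨l, sfun, hl, hs0, hsl, hstep⟩ := IG.chain E h2E x1 Dmp hDpos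
    (by intro e he; rw [hn1]; exact hstrad n1 e he)
    (by
      intro e he
      have : x1 + Dmp = x0 + (n1 + 1) * Dmp := by rw [hn1]; ring
      rw [this]
      exact hstrad (n1+1) e he)
    hcov
  have hmodD : Dmp % (m:ℤ) = 0 := by
    rw [hDmp]
    exact Int.mul_emod_right _ _
  have hcount := IG.chain_count E m x1 Dmp hmodD h6E l sfun hl hs0 hsl hstep
  calc m ≤ E.card := hcount
    _ ≤ (F.filter isBotS).card := by rw [hE, botE]; exact Finset.card_image_le

end CaseB

section CaseBTop

variable {m p q : ℕ} (Γ : Angulation m p q)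

lemma caseB_top (hm : 2 ≤ m) (hq : 1 ≤ q) (x0 y0 : ℤ)
    (hall : ∀ x y, Arc.bridging x y ∈ Γ.arcs →
      ∃ n : ℤ, x = x0 + n * ((m:ℤ) * p) ∧ y = y0 + n * ((m:ℤ) * q))
    (F : Finset Side) (hF : F ∈ Γ.faces)
    (hBF : Side.arc (Arc.bridging x0 y0) ∈ F) :
    m ≤ (F.filter isTopS).card := by
  classical
  set E := topE F with hE
  set Dmq : ℤ := (m:ℤ) * q with hDmq
  have hDpos : 0 < Dmq := by
    rw [hDmq]
    have h1 : (0:ℤ) < (m:ℤ) := by exact_mod_cast (by omega : 0 < m)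
    have h2 : (0:ℤ) < (q:ℤ) := by exact_mod_cast (by omega : 0 < q)
    positivity
  have hEmem : ∀ e ∈ E, ∃ s, s ∈ F ∧ isTopS s ∧ topPair s = e := by
    intro e he
    rw [hE, topE] at he
    obtain ⟨s, hs, hse⟩ := Finset.mem_image.1 he
    rw [Finset.mem_filter] at hs
    exact ⟨s, hs.1, hs.2, hse⟩
  have h1E : ∀ e ∈ E, e.1 < e.2 := by
    intro e he
    obtain ⟨s, hsF, hsb, hse⟩ := hEmem e he
    rw [← hse]; exact topPair_lt Γ hF hm hsF hsb
  have h6E : ∀ e ∈ E, (e.2 - e.1) % (m:ℤ) = 1 := by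
    intro e he
    obtain ⟨s, hsF, hsb, hse⟩ := hEmem e he
    rw [← hse]; exact topPair_mod Γ hF hm hsF hsb
  have h2E : ∀ e ∈ E, ∀ f ∈ E, ¬(e.1 < f.1 ∧ f.1 < e.2 ∧ e.2 < f.2) := by
    intro e he f hf hcr
    obtain ⟨s, hsF, hsb, hse⟩ := hEmem e he
    obtain ⟨t, htF, htb, hte⟩ := hEmem f hf
    rcases topS_cases hsb with ⟨i, rfl⟩ | ⟨u, v, rfl⟩
    · rw [← hse] at hcr; simp only [topPair] at hcr; omega
    · rcases topS_cases htb with ⟨i', rfl⟩ | ⟨u', v', rfl⟩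
      · rw [← hse, ← hte] at hcr; simp only [topPair] at hcr; omega
      · have ha := arc_mem_of_face Γ hF hsF
        have hb := arc_mem_of_face Γ hF htF
        rw [← hse, ← hte] at hcr
        simp only [topPair] at hcr
        exact Γ.noncross _ ha _ hb (Or.inl hcr)
  have hstrad : ∀ (n : ℤ) (e : ℤ × ℤ), e ∈ E → ¬(e.1 < y0 + n * Dmq ∧ y0 + n * Dmq < e.2) := by
    intro n e he hcr
    obtain ⟨s, hsF, hsb, hse⟩ := hEmem e he
    have hBn : Arc.bridging (x0 + n * ((m:ℤ)*p)) (y0 + n * Dmq) ∈ Γ.arcs := by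
      have hBarc : Arc.bridging x0 y0 ∈ Γ.arcs := arc_mem_of_face Γ hF hBF
      have := mem_shiftArc Γ n _ hBarc
      simpa [shiftArc, hDmq] using this
    rcases topS_cases hsb with ⟨i, rfl⟩ | ⟨u, v, rfl⟩
    · rw [← hse] at hcr; simp only [topPair] at hcr; omega
    · have ha := arc_mem_of_face Γ hF hsF
      rw [← hse] at hcr
      simp only [topPair] at hcr
      exact Γ.noncross _ ha _ hBn hcr
  set X : Finset ℤ := (F.filter isBridgeS).image brTop with hX
  have hXmem : ∀ z, z ∈ X ↔ ∃ x, Side.arc (Arc.bridging x z) ∈ F := by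
    intro z
    rw [hX]
    constructor
    · intro hz
      obtain ⟨s, hs, hsz⟩ := Finset.mem_image.1 hz
      rw [Finset.mem_filter] at hs
      obtain ⟨x, y, rfl⟩ := bridgeS_cases hs.2
      simp only [brTop] at hsz
      subst hsz
      exact ⟨x, hs.1⟩
    · rintro ⟨x, hy⟩
      apply Finset.mem_image.2
      refine ⟨Side.arc (Arc.bridging x z), ?_, rfl⟩
      rw [Finset.mem_filter]
      exact ⟨hy, by simp [isBridgeS]⟩
  have hbrcount : ∀ z : ℤ,
      (F.filter (fun s => ∃ x y, s = Side.arc (Arc.bridging x y) ∧ y = z)).card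
        = (if z ∈ X then 1 else 0) := by
    intro z
    by_cases hz : z ∈ X
    · rw [if_pos hz]
      obtain ⟨x, hy⟩ := (hXmem z).1 hz
      rw [Finset.card_eq_one]
      refine ⟨Side.arc (Arc.bridging x z), ?_⟩
      ext s
      rw [Finset.mem_filter, Finset.mem_singleton]
      constructor
      · rintro ⟨hsF, x', y', rfl, rfl⟩
        have h1 := hall x' y' (arc_mem_of_face Γ hF hsF)
        have h2 := hall x y' (arc_mem_of_face Γ hF hy)
        obtain ⟨n1, hn1, hn1'⟩ := h1
        obtain ⟨n2, hn2, hn2'⟩ := h2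
        have hn12 : n1 = n2 := by
          have h3 : y0 + n1 * ((m:ℤ)*q) = y0 + n2 * ((m:ℤ)*q) := by rw [← hn1', ← hn2']
          have h3' : n1 * ((m:ℤ)*q) = n2 * ((m:ℤ)*q) := by linarith
          have h4 : (0:ℤ) < (m:ℤ)*q := hDmq ▸ hDpos
          exact mul_right_cancel₀ (ne_of_gt h4) h3'
        subst hn12
        have hxx : x' = x := by rw [hn1, hn2]
        rw [hxx]
      · rintro rfl
        exact ⟨hy, x, z, rfl, rfl⟩
    · rw [if_neg hz]
      rw [Finset.card_eq_zero, Finset.filter_eq_empty_iff]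
      rintro s hsF ⟨x', y', rfl, rfl⟩
      exact hz ((hXmem y').2 ⟨x', hsF⟩)
  have hdeg : ∀ z : ℤ, IG.degE E z + (if z ∈ X then 1 else 0)
      = (F.filter (fun s => Pt.top z ∈ s.endpoints)).card := by
    intro z
    rw [hE, degE_topE Γ hF hm z, attop_split F z, hbrcount z]
  have hX1 : ∀ z ∈ X, IG.degE E z = 1 := by
    intro z hz
    have h := hdeg z
    rw [if_pos hz] at h
    rcases Γ.face_polygon F hF (Pt.top z) with h0 | h2 <;> omega
  have hX2 : ∀ z, z ∉ X → IG.degE E z = 0 ∨ IG.degE E z = 2 := by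
    intro z hz
    have h := hdeg z
    rw [if_neg hz] at h
    rcases Γ.face_polygon F hF (Pt.top z) with h0 | h2
    · left; omega
    · right; omega
  have hy0X : y0 ∈ X := (hXmem y0).2 ⟨x0, hBF⟩
  have hXne : X.Nonempty := ⟨y0, hy0X⟩
  have hXeven : Even X.card := by
    set jbig := ((E.image Prod.snd) ∪ X).max' (by
      refine Finset.Nonempty.mono (Finset.subset_union_right) hXne) with hjbig
    have hpar := IG.parity E h1E X hX1 hX2 jbig
    have hc0 : E.filter (fun e => e.1 ≤ jbig ∧ jbig < e.2) = ∅ := by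
      rw [Finset.filter_eq_empty_iff]
      intro e he hcr
      have : e.2 ∈ (E.image Prod.snd) ∪ X :=
        Finset.mem_union_left _ (Finset.mem_image_of_mem _ he)
      have := Finset.le_max' _ _ this
      omega
    have hXall : X.filter (fun z => z ≤ jbig) = X := by
      apply Finset.filter_true_of_mem
      intro z hz
      exact Finset.le_max' _ _ (Finset.mem_union_right _ hz)
    rw [hc0, hXall] at hpar
    simpa using hpar
  have hX2card : 2 ≤ X.card := by
    have h1 : 1 ≤ X.card := Finset.card_pos.2 hXne
    rw [Nat.even_iff] at hXeven
    omega
  set x1 := X.min' hXne with hx1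
  have hx1X : x1 ∈ X := X.min'_mem hXne
  have hEne : (X.erase x1).Nonempty := by
    rw [← Finset.card_pos, Finset.card_erase_of_mem hx1X]
    omega
  set x2 := (X.erase x1).min' hEne with hx2
  have hx2X' : x2 ∈ X.erase x1 := Finset.min'_mem _ hEne
  have hx2X : x2 ∈ X := (Finset.mem_erase.1 hx2X').2
  have hx2ne : x2 ≠ x1 := (Finset.mem_erase.1 hx2X').1
  have hx1le : ∀ z ∈ X, x1 ≤ z := fun z hz => X.min'_le z hz
  have hx2le : ∀ z ∈ X, z ≠ x1 → x2 ≤ z := by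
    intro z hz hne
    exact (X.erase x1).min'_le z (Finset.mem_erase.2 ⟨hne, hz⟩)
  have hlat : ∀ z ∈ X, ∃ n : ℤ, z = y0 + n * Dmq := by
    intro z hz
    obtain ⟨x, hy⟩ := (hXmem z).1 hz
    obtain ⟨n, _, hn⟩ := hall x z (arc_mem_of_face Γ hF hy)
    exact ⟨n, by rw [hDmq]; exact hn⟩
  obtain ⟨n1, hn1⟩ := hlat x1 hx1X
  obtain ⟨n2, hn2⟩ := hlat x2 hx2X
  have hx1x2 : x1 + Dmq ≤ x2 := by
    have hlt : x1 < x2 := lt_of_le_of_ne (hx1le x2 hx2X) (Ne.symm hx2ne)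
    have hd : 0 < (n2 - n1) * Dmq := by nlinarith
    have hn21 : 1 ≤ n2 - n1 := by nlinarith
    nlinarith
  have hcov : ∀ j, x1 ≤ j → j < x1 + Dmq → ∃ e ∈ E, e.1 ≤ j ∧ j < e.2 := by
    intro j hj1 hj2
    have hXj : X.filter (fun z => z ≤ j) = {x1} := by
      ext z
      rw [Finset.mem_filter, Finset.mem_singleton]
      constructor
      · rintro ⟨hzX, hzj⟩
        by_contra hne
        have := hx2le z hzX hne
        omega
      · rintro rfl
        exact ⟨hx1X, hj1⟩
    have hpar := IG.parity E h1E X hX1 hX2 j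
    rw [hXj] at hpar
    simp only [Finset.card_singleton] at hpar
    have hcne : (E.filter (fun e => e.1 ≤ j ∧ j < e.2)).card ≠ 0 := by
      intro h0
      rw [h0] at hpar
      simpa using hpar
    have hpos : 0 < (E.filter (fun e => e.1 ≤ j ∧ j < e.2)).card := by omega
    obtain ⟨e, he⟩ := Finset.card_pos.1 hpos
    rw [Finset.mem_filter] at he
    exact ⟨e, he.1, he.2⟩
  obtain ⟨l, sfun, hl, hs0, hsl, hstep⟩ := IG.chain E h2E x1 Dmq hDpos
    (by intro e he; rw [hn1]; exact hstrad n1 e he)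
    (by
      intro e he
      have : x1 + Dmq = y0 + (n1 + 1) * Dmq := by rw [hn1]; ring
      rw [this]
      exact hstrad (n1+1) e he)
    hcov
  have hmodD : Dmq % (m:ℤ) = 0 := by
    rw [hDmq]
    exact Int.mul_emod_right _ _
  have hcount := IG.chain_count E m x1 Dmq hmodD h6E l sfun hl hs0 hsl hstep
  calc m ≤ E.card := hcount
    _ ≤ (F.filter isTopS).card := by rw [hE, topE]; exact Finset.card_image_le

end CaseBTop

section CaseBMain

variable {m p q : ℕ} (Γ : Angulation m p q)

lemma no_single_orbit (hm : 2 ≤ m) (hp : 1 ≤ p) (hq : 1 ≤ q) (x0 y0 : ℤ)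
    (hB : Arc.bridging x0 y0 ∈ Γ.arcs)
    (hall : ∀ x y, Arc.bridging x y ∈ Γ.arcs →
      ∃ n : ℤ, x = x0 + n * ((m:ℤ) * p) ∧ y = y0 + n * ((m:ℤ) * q)) : False := by
  classical
  obtain ⟨F, hF, G, hG, hFG, hBF, hBG, huniq⟩ := Γ.arc_two_faces _ hB
  have hbot := caseB_bot Γ hm hp x0 y0 hall F hF hBF
  have htop := caseB_top Γ hm hq x0 y0 hall F hF hBF
  have hbr : 1 ≤ (F.filter isBridgeS).card := by
    apply Finset.card_pos.2
    exact ⟨Side.arc (Arc.bridging x0 y0), Finset.mem_filter.2 ⟨hBF, by simp [isBridgeS]⟩⟩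
  have hd1 : Disjoint (F.filter isBotS) (F.filter isTopS) := by
    rw [Finset.disjoint_left]
    intro s hs1 hs2
    rw [Finset.mem_filter] at hs1 hs2
    rcases botS_cases hs1.2 with ⟨i, rfl⟩ | ⟨u, v, rfl⟩ <;> simp [isTopS] at hs2
  have hd2 : Disjoint (F.filter isBotS ∪ F.filter isTopS) (F.filter isBridgeS) := by
    rw [Finset.disjoint_left]
    intro s hs1 hs2
    rw [Finset.mem_union] at hs1
    rw [Finset.mem_filter] at hs2
    rcases hs1 with hs1 | hs1 <;> rw [Finset.mem_filter] at hs1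
    · rcases botS_cases hs1.2 with ⟨i, rfl⟩ | ⟨u, v, rfl⟩ <;> simp [isBridgeS] at hs2
    · rcases topS_cases hs1.2 with ⟨i, rfl⟩ | ⟨u, v, rfl⟩ <;> simp [isBridgeS] at hs2
  have hsub : (F.filter isBotS ∪ F.filter isTopS) ∪ F.filter isBridgeS ⊆ F := by
    intro s hs
    rcases Finset.mem_union.1 hs with hs | hs
    · rcases Finset.mem_union.1 hs with hs | hs <;> exact (Finset.mem_filter.1 hs).1
    · exact (Finset.mem_filter.1 hs).1
  have hcards : (F.filter isBotS).card + (F.filter isTopS).card + (F.filter isBridgeS).card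
      ≤ F.card := by
    have h1 := Finset.card_union_of_disjoint hd1
    have h2 := Finset.card_union_of_disjoint hd2
    have h3 := Finset.card_le_card hsub
    omega
  have hcardF := Γ.face_card F hF
  omega

end CaseBMain

/-! ### Case A: there must exist a bridging arc -/

def coversS : Side → Prop := fun s => isBotS s ∧ (botPair s).1 ≤ 0 ∧ 0 < (botPair s).2

section CaseA

variable {m p q : ℕ} (Γ : Angulation m p q)

lemma caseA_face_even (hm : 2 ≤ m)
    (hnob : ∀ x y : ℤ, Arc.bridging x y ∉ Γ.arcs)
    (H : Finset Side) (hH : H ∈ Γ.faces) :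
    Even ((H.filter coversS).card) := by
  classical
  have hbr0 : ∀ z : ℤ,
      (H.filter (fun s => ∃ x y, s = Side.arc (Arc.bridging x y) ∧ x = z)).card = 0 := by
    intro z
    rw [Finset.card_eq_zero, Finset.filter_eq_empty_iff]
    rintro s hsH ⟨x, y, rfl, rfl⟩
    exact hnob _ _ (arc_mem_of_face Γ hH hsH)
  have hX2 : ∀ z : ℤ, IG.degE (botE H) z = 0 ∨ IG.degE (botE H) z = 2 := by
    intro z
    have h := atbot_split H z
    rw [hbr0 z] at h
    rw [degE_botE Γ hH hm z]
    rcases Γ.face_polygon H hH (Pt.bot z) with h0 | h2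
    · left; omega
    · right; omega
  have hpar := IG.parity (botE H)
    (by
      intro e he
      rw [botE] at he
      obtain ⟨s, hs, hse⟩ := Finset.mem_image.1 he
      rw [Finset.mem_filter] at hs
      rw [← hse]
      exact botPair_lt Γ hH hm hs.1 hs.2)
    (∅ : Finset ℤ) (by simp) (fun z _ => hX2 z) 0
  simp only [Finset.filter_empty, Finset.card_empty, Nat.add_zero] at hpar
  -- identify the two cardinalities
  have hcardeq : (H.filter coversS).card
      = ((botE H).filter (fun e => e.1 ≤ 0 ∧ 0 < e.2)).card := by
    rw [botE, Finset.filter_image]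
    rw [Finset.card_image_of_injOn
      ((botPair_injOn Γ hH hm).mono (by
        intro x hx
        simp only [Finset.coe_filter, Set.mem_setOf_eq, Finset.mem_coe,
          Finset.mem_filter] at hx ⊢
        exact hx.1))]
    rw [Finset.filter_filter]
    congr 1
    apply Finset.filter_congr
    intro s _
    exact Iff.rfl
  rw [hcardeq]
  exact hpar

lemma caseA (hm : 2 ≤ m) (hp : 1 ≤ p) (hq : 1 ≤ q)
    (hnob : ∀ x y : ℤ, Arc.bridging x y ∉ Γ.arcs) : False := by
  classical
  obtain ⟨reps, hrc, hrsub, hrall, _⟩ := Γ.orbit_count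
  set bnd : Arc → ℤ := fun r => match r with
    | .botPeriph u v => |u| + |v| + 1
    | _ => 0
    with hbnd
  set D0 : Finset Arc := reps.biUnion
    (fun r => (Finset.Icc (-(bnd r)) (bnd r)).image (fun n => shiftArc m p q n r)) with hD0def
  have hD0 : ∀ u v : ℤ, Arc.botPeriph u v ∈ Γ.arcs → u ≤ 0 → 1 ≤ v →
      Arc.botPeriph u v ∈ D0 := by
    intro u v ha hu hv
    obtain ⟨r, hr, n, hsh⟩ := hrall _ ha
    have hback : shiftArc m p q (-n) r = Arc.botPeriph u v := by
      rw [← hsh, shiftArc_add]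
      simp [shiftArc_zero]
    cases r with
    | bridging x y => simp [shiftArc] at hback
    | topPeriph x y => simp [shiftArc] at hback
    | botPeriph u' v' =>
      simp only [shiftArc, Arc.botPeriph.injEq] at hback
      obtain ⟨hu', hv'⟩ := hback
      rw [hD0def]
      apply Finset.mem_biUnion.2
      refine ⟨_, hr, ?_⟩
      apply Finset.mem_image.2
      refine ⟨-n, ?_, by rw [← hu', ← hv']; simp [shiftArc]⟩
      rw [Finset.mem_Icc]
      have hbr : bnd (Arc.botPeriph u' v') = |u'| + |v'| + 1 := by rw [hbnd]
      rw [hbr]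
      set t := -n with ht
      have hP : (1:ℤ) ≤ (m:ℤ) * p := by
        have h1 : (1:ℤ) ≤ (m:ℤ) := by exact_mod_cast (by omega : 1 ≤ m)
        have h2 : (1:ℤ) ≤ (p:ℤ) := by exact_mod_cast hp
        nlinarith
      have h1 : t * ((m:ℤ)*p) ≤ -u' := by
        have : u' + t * ((m:ℤ)*p) ≤ 0 := by rw [hu']; exact hu
        linarith
      have h2 : 1 - v' ≤ t * ((m:ℤ)*p) := by
        have : 1 ≤ v' + t * ((m:ℤ)*p) := by rw [hv']; exact hv
        linarith
      have hau := abs_nonneg u'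
      have hav := abs_nonneg v'
      have hau' := neg_abs_le u'
      have hau'' := le_abs_self u'
      have hav' := neg_abs_le v'
      have hav'' := le_abs_self v'
      rcases le_or_gt 0 t with htpos | htneg
      · constructor
        · linarith
        · nlinarith
      · constructor
        · nlinarith
        · linarith
  set C : Finset Side := insert (Side.botSeg 0) ((D0.image Side.arc).filter coversS)
    with hCdef
  have hCcov : ∀ s ∈ C, coversS s := by
    intro s hs
    rw [hCdef, Finset.mem_insert] at hs
    rcases hs with rfl | hs
    · refine ⟨by simp [isBotS], ?_, ?_⟩ <;> simp [botPair]
    · exact (Finset.mem_filter.1 hs).2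
  have hCall : ∀ H ∈ Γ.faces, ∀ s ∈ H, coversS s → s ∈ C := by
    intro H hH s hsH hscov
    obtain ⟨hbot, hc1, hc2⟩ := hscov
    rcases botS_cases hbot with ⟨i, rfl⟩ | ⟨u, v, rfl⟩
    · simp only [botPair] at hc1 hc2
      have : i = 0 := by omega
      subst this
      rw [hCdef]
      exact Finset.mem_insert_self _ _
    · simp only [botPair] at hc1 hc2
      have hmem := arc_mem_of_face Γ hH hsH
      have hD := hD0 u v hmem hc1 (by omega)
      rw [hCdef]
      apply Finset.mem_insert_of_mem
      apply Finset.mem_filter.2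
      exact ⟨Finset.mem_image_of_mem _ hD, ⟨by simp [isBotS], by simp [botPair]; omega⟩⟩
  have hFs : ∀ s ∈ C, ∃ fs : Finset (Finset Side),
      (∀ H, H ∈ fs ↔ H ∈ Γ.faces ∧ s ∈ H) ∧
      (s = Side.botSeg 0 → fs.card = 1) ∧
      (s ≠ Side.botSeg 0 → Even fs.card) := by
    intro s hs
    rw [hCdef, Finset.mem_insert] at hs
    rcases hs with rfl | hs
    · obtain ⟨F, ⟨hFf, hFm⟩, huni⟩ := Γ.botSeg_face 0
      refine ⟨{F}, ?_, fun _ => by simp, fun h => absurd rfl h⟩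
      intro H
      rw [Finset.mem_singleton]
      constructor
      · rintro rfl; exact ⟨hFf, hFm⟩
      · rintro ⟨h1, h2⟩; exact huni H ⟨h1, h2⟩
    · obtain ⟨b, hb, rfl⟩ := Finset.mem_image.1 (Finset.mem_filter.1 hs).1
      by_cases hbin : b ∈ Γ.arcs
      · obtain ⟨F, hF, G, hG, hFG, hbF, hbG, huniq⟩ := Γ.arc_two_faces _ hbin
        refine ⟨{F, G}, ?_, fun h => by simp at h, fun _ => ?_⟩
        · intro H
          constructor
          · intro hH
            rcases Finset.mem_insert.1 hH with rfl | hH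
            · exact ⟨hF, hbF⟩
            · rw [Finset.mem_singleton] at hH
              subst hH
              exact ⟨hG, hbG⟩
          · rintro ⟨h1, h2⟩
            rcases huniq H h1 h2 with rfl | rfl
            · exact Finset.mem_insert_self _ _
            · exact Finset.mem_insert_of_mem (Finset.mem_singleton_self _)
        · have : ({F, G} : Finset (Finset Side)).card = 2 := by
            rw [Finset.card_insert_of_notMem (by simpa using hFG), Finset.card_singleton]
          rw [this]
          exact even_two
      · refine ⟨∅, ?_, fun h => by simp at h, fun _ => by simp⟩
        intro H
        simp only [Finset.notMem_empty, false_iff]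
        rintro ⟨h1, h2⟩
        exact hbin (arc_mem_of_face Γ h1 h2)
  choose! FS hFS1 hFS2 hFS3 using hFs
  set FF : Finset (Finset Side) := C.biUnion FS with hFFdef
  have hFFfaces : ∀ H ∈ FF, H ∈ Γ.faces := by
    intro H hH
    obtain ⟨s, hsC, hHs⟩ := Finset.mem_biUnion.1 hH
    exact ((hFS1 s hsC H).1 hHs).1
  -- double counting
  have step1 : ∀ H ∈ FF, (H.filter coversS).card = (C.filter (fun s => s ∈ H)).card := by
    intro H hH
    congr 1
    ext s
    rw [Finset.mem_filter, Finset.mem_filter]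
    constructor
    · rintro ⟨h1, h2⟩
      exact ⟨hCall H (hFFfaces H hH) s h1 h2, h1⟩
    · rintro ⟨h1, h2⟩
      exact ⟨h2, hCcov s h1⟩
  have step2 : ∑ H ∈ FF, (C.filter (fun s => s ∈ H)).card
      = ∑ s ∈ C, (FF.filter (fun H => s ∈ H)).card := by
    have h1 : ∀ H ∈ FF, (C.filter (fun s => s ∈ H)).card
        = ∑ s ∈ C, (if s ∈ H then 1 else 0) := by
      intro H _; rw [Finset.card_filter]
    have h2 : ∀ s ∈ C, (FF.filter (fun H => s ∈ H)).card
        = ∑ H ∈ FF, (if s ∈ H then 1 else 0) := by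
      intro s _; rw [Finset.card_filter]
    rw [Finset.sum_congr rfl h1, Finset.sum_congr rfl h2, Finset.sum_comm]
  have step3 : ∀ s ∈ C, FF.filter (fun H => s ∈ H) = FS s := by
    intro s hsC
    ext H
    rw [Finset.mem_filter]
    constructor
    · rintro ⟨h1, h2⟩
      exact (hFS1 s hsC H).2 ⟨hFFfaces H h1, h2⟩
    · intro h
      have := (hFS1 s hsC H).1 h
      constructor
      · rw [hFFdef]
        exact Finset.mem_biUnion.2 ⟨s, hsC, h⟩
      · exact this.2
  have hnotmem : Side.botSeg 0 ∉ (D0.image Side.arc).filter coversS := by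
    intro h
    obtain ⟨b, _, hb⟩ := Finset.mem_image.1 (Finset.mem_filter.1 h).1
    simp at hb
  have hT : ∑ s ∈ C, (FS s).card
      = (FS (Side.botSeg 0)).card + ∑ s ∈ (D0.image Side.arc).filter coversS, (FS s).card := by
    rw [hCdef, Finset.sum_insert hnotmem]
  have hTodd : ¬ Even (∑ s ∈ C, (FS s).card) := by
    rw [hT]
    have h1 : (FS (Side.botSeg 0)).card = 1 :=
      hFS2 _ (by rw [hCdef]; exact Finset.mem_insert_self _ _) rfl
    have h2 : Even (∑ s ∈ (D0.image Side.arc).filter coversS, (FS s).card) := by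
      apply Finset.even_sum
      intro s hsmem
      have hsC : s ∈ C := by rw [hCdef]; exact Finset.mem_insert_of_mem hsmem
      apply hFS3 s hsC
      obtain ⟨b, _, hb⟩ := Finset.mem_image.1 (Finset.mem_filter.1 hsmem).1
      rw [← hb]
      simp
    rw [h1]
    simp only [Nat.even_iff] at h2 ⊢
    omega
  have hTeven : Even (∑ H ∈ FF, (H.filter coversS).card) := by
    apply Finset.even_sum
    intro H hH
    exact caseA_face_even Γ hm hnob H (hFFfaces H hH)
  have hfinal : (∑ H ∈ FF, (H.filter coversS).card) = ∑ s ∈ C, (FS s).card := by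
    rw [Finset.sum_congr rfl step1, step2]
    exact Finset.sum_congr rfl (fun s hs => by rw [step3 s hs])
  rw [hfinal] at hTeven
  exact hTodd hTeven

end CaseA


/-- Let `m ≥ 2`.  Every `(m+2)`-angulation `Γ` of the annulus
`A(p,q)` contains at least two distinct `σ`-orbits of bridging arcs. -/
theorem exists_two_bridging_orbits (m p q : ℕ) (hm : 2 ≤ m) (hp : 1 ≤ p) (hq : 1 ≤ q)
    (Γ : Angulation m p q) :
    ∃ a ∈ Γ.arcs, ∃ b ∈ Γ.arcs,
      a.IsBridging ∧ b.IsBridging ∧ ¬ SameOrbit m p q a b := by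
  classical
  by_contra hcon
  push_neg at hcon
  by_cases hex : ∃ x y : ℤ, Arc.bridging x y ∈ Γ.arcs
  · obtain ⟨x0, y0, hB⟩ := hex
    refine (no_single_orbit Γ hm hp hq x0 y0 hB ?_).elim
    intro x y hxy
    have hso := hcon _ hB _ hxy trivial trivial
    obtain ⟨n, hn⟩ := hso
    simp only [shiftArc, Arc.bridging.injEq] at hn
    exact ⟨n, hn.1.symm, hn.2.symm⟩
  · push_neg at hex
    exact (caseA Γ hm hp hq (fun x y h => hex x y h)).elim

end ClusterAnnulus
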